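/- Let (Ω, 𝔄) be a measurable space, σ a finite positive semidefinite q×q matrix measure with trace measure τ := tr σ, and f ∈ L¹(σ) a complex-valued measurable function with f(ω) ∈ (0,∞) for τ-almost all ω. Then the column space of ∫_Ω f dσ equals the column space of σ(Ω), and the null space of ∫_Ω f dσ equals the null space of σ(Ω). -/

import Mathlib

open Matrix Complex MeasureTheory Filter
open scoped ComplexOrder

/-- The "imaginary part" of a complex square matrix: `Im M = (M - M*)/(2i)`. -/
noncomputable def mIm {q : ℕ} (M : Matrix (Fin q) (Fin q) ℂ) : Matrix (Fin q) (Fin q) ℂ :=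
  ((2 : ℂ) * Complex.I)⁻¹ • (M - Mᴴ)

/-- The "real part" of a complex square matrix: `Re M = (M + M*)/2`. -/
noncomputable def mRe {q : ℕ} (M : Matrix (Fin q) (Fin q) ℂ) : Matrix (Fin q) (Fin q) ℂ :=
  ((2 : ℂ))⁻¹ • (M + Mᴴ)

section Aux

variable {q : ℕ} {Ω : Type*} [MeasurableSpace Ω] {τ : Measure Ω}

/-- A PSD complex matrix with nonpositive real trace is zero. -/
lemma psd_eq_zero_of_trace_re_nonpos {M : Matrix (Fin q) (Fin q) ℂ}
    (hM : M.PosSemidef) (h : M.trace.re ≤ 0) : M = 0 := by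
  obtain ⟨B, rfl⟩ : ∃ B : Matrix (Fin q) (Fin q) ℂ, M = Bᴴ * B := by
    open scoped MatrixOrder in
    exact CStarAlgebra.nonneg_iff_eq_star_mul_self.mp hM.nonneg
  have key : (Bᴴ * B).trace = ((∑ j, ∑ k, Complex.normSq (B k j) : ℝ) : ℂ) := by
    push_cast
    simp only [Matrix.trace, Matrix.diag, Matrix.mul_apply, Matrix.conjTranspose_apply,
      Pi.star_apply, RCLike.star_def]
    refine Finset.sum_congr rfl fun j _ => Finset.sum_congr rfl fun k _ => ?_
    rw [Complex.normSq_eq_conj_mul_self]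
  have hsum : (∑ j, ∑ k, Complex.normSq (B k j) : ℝ) = 0 := by
    have h1 : (0:ℝ) ≤ ∑ j, ∑ k, Complex.normSq (B k j) :=
      Finset.sum_nonneg fun j _ => Finset.sum_nonneg fun k _ => Complex.normSq_nonneg _
    have h2 : (Bᴴ * B).trace.re = ∑ j, ∑ k, Complex.normSq (B k j) := by
      rw [key]; exact Complex.ofReal_re _
    linarith [h2 ▸ h]
  have hB : B = 0 := by
    ext k j
    have := (Finset.sum_eq_zero_iff_of_nonneg
      (fun j _ => Finset.sum_nonneg fun k _ => Complex.normSq_nonneg (B k j))).mp hsum j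
      (Finset.mem_univ j)
    have := (Finset.sum_eq_zero_iff_of_nonneg
      (fun k _ => Complex.normSq_nonneg (B k j))).mp this k (Finset.mem_univ k)
    simpa using Complex.normSq_eq_zero.mp this
  simp [hB]

lemma range_eq_orth_ker_adjoint {E : Type*} [NormedAddCommGroup E] [InnerProductSpace ℂ E]
    [FiniteDimensional ℂ E] (T : E →ₗ[ℂ] E) :
    LinearMap.range T = (LinearMap.ker (LinearMap.adjoint T))ᗮ := by
  have horth : (LinearMap.range T)ᗮ = LinearMap.ker (LinearMap.adjoint T) := by
    ext x
    simp only [Submodule.mem_orthogonal, LinearMap.mem_ker]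
    constructor
    · intro hx
      have h1 : ∀ y, (inner ℂ y (LinearMap.adjoint T x) : ℂ) = 0 := fun y => by
        rw [LinearMap.adjoint_inner_right]
        exact hx (T y) (LinearMap.mem_range_self T y)
      have := h1 (LinearMap.adjoint T x)
      rwa [inner_self_eq_zero] at this
    · rintro hx u ⟨y, rfl⟩
      rw [← LinearMap.adjoint_inner_right, hx, inner_zero_right]
  rw [← horth, Submodule.orthogonal_orthogonal]

/-- Hermitian matrices with equal kernels have equal ranges. -/
lemma range_eq_of_ker_eq {M N : Matrix (Fin q) (Fin q) ℂ}
    (hM : M.IsHermitian) (hN : N.IsHermitian)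
    (h : LinearMap.ker M.mulVecLin = LinearMap.ker N.mulVecLin) :
    LinearMap.range M.mulVecLin = LinearMap.range N.mulVecLin := by
  set e : EuclideanSpace ℂ (Fin q) ≃ₗ[ℂ] (Fin q → ℂ) := WithLp.linearEquiv 2 ℂ _ with he
  have hcomp : ∀ A : Matrix (Fin q) (Fin q) ℂ,
      Matrix.toEuclideanLin A = (e.symm.toLinearMap ∘ₗ A.mulVecLin) ∘ₗ e.toLinearMap := by
    intro A; ext v; rfl
  have hrange : ∀ A : Matrix (Fin q) (Fin q) ℂ,
      LinearMap.range (Matrix.toEuclideanLin A) =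
        (LinearMap.range A.mulVecLin).map e.symm.toLinearMap := by
    intro A
    rw [hcomp A, LinearMap.range_comp, LinearEquiv.range, Submodule.map_top,
      LinearMap.range_comp]
  have hker : ∀ A : Matrix (Fin q) (Fin q) ℂ,
      LinearMap.ker (Matrix.toEuclideanLin A) =
        (LinearMap.ker A.mulVecLin).comap e.toLinearMap := by
    intro A
    rw [hcomp A, LinearMap.ker_comp, LinearMap.ker_comp, LinearEquiv.ker, Submodule.comap_bot]
  have hadj : ∀ A : Matrix (Fin q) (Fin q) ℂ, A.IsHermitian →
      LinearMap.adjoint (Matrix.toEuclideanLin A) = Matrix.toEuclideanLin A := by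
    intro A hA
    rw [← Matrix.toEuclideanLin_conjTranspose_eq_adjoint, hA.eq]
  have hEranges : LinearMap.range (Matrix.toEuclideanLin M) =
      LinearMap.range (Matrix.toEuclideanLin N) := by
    rw [range_eq_orth_ker_adjoint, range_eq_orth_ker_adjoint, hadj M hM, hadj N hN,
      hker, hker, h]
  have := hrange M ▸ hrange N ▸ hEranges
  exact Submodule.map_injective_of_injective e.symm.injective this

lemma dot_expand (M : Matrix (Fin q) (Fin q) ℂ) (x : Fin q → ℂ) :
    star x ⬝ᵥ M *ᵥ x = ∑ j, ∑ k, (starRingEnd ℂ) (x j) * (M j k * x k) := by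
  simp [dotProduct, Matrix.mulVec, Finset.mul_sum, RCLike.star_def]

lemma quad_integrable (x : Fin q → ℂ) {m : Ω → Matrix (Fin q) (Fin q) ℂ}
    (hint : ∀ j k, Integrable (fun ω => m ω j k) τ) :
    Integrable (fun ω => star x ⬝ᵥ (m ω) *ᵥ x) τ := by
  simp only [dot_expand]
  refine integrable_finset_sum _ fun j _ => integrable_finset_sum _ fun k _ => ?_
  exact (((hint j k).mul_const (x k)).const_mul _)

lemma quad_integral (x : Fin q → ℂ) {m : Ω → Matrix (Fin q) (Fin q) ℂ}
    (hint : ∀ j k, Integrable (fun ω => m ω j k) τ) :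
    star x ⬝ᵥ (Matrix.of fun j k => ∫ ω, m ω j k ∂τ) *ᵥ x
      = ∫ ω, star x ⬝ᵥ (m ω) *ᵥ x ∂τ := by
  simp only [dot_expand, Matrix.of_apply]
  rw [integral_finset_sum _ fun j _ => integrable_finset_sum _ fun k _ =>
    (((hint j k).mul_const (x k)).const_mul _)]
  refine Finset.sum_congr rfl fun j _ => ?_
  rw [integral_finset_sum _ fun k _ => (((hint j k).mul_const (x k)).const_mul _)]
  refine Finset.sum_congr rfl fun k _ => ?_
  rw [MeasureTheory.integral_const_mul, MeasureTheory.integral_mul_const]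

lemma integral_complex_nonneg {h : Ω → ℂ} (hint : Integrable h τ)
    (hpos : ∀ᵐ ω ∂τ, 0 ≤ h ω) : 0 ≤ ∫ ω, h ω ∂τ := by
  rw [Complex.nonneg_iff]
  have hre : (∫ ω, h ω ∂τ).re = ∫ ω, (h ω).re ∂τ := by
    rw [← RCLike.re_to_complex, ← integral_re hint]; rfl
  have him : (∫ ω, h ω ∂τ).im = ∫ ω, (h ω).im ∂τ := by
    rw [← RCLike.im_to_complex, ← integral_im hint]; rfl
  refine ⟨?_, ?_⟩
  · rw [hre]
    refine integral_nonneg_of_ae ?_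
    filter_upwards [hpos] with ω hω using (Complex.nonneg_iff.mp hω).1
  · rw [him]
    symm
    rw [integral_congr_ae (g := fun _ => (0:ℝ)) ?_]
    · simp
    · filter_upwards [hpos] with ω hω using ((Complex.nonneg_iff.mp hω).2).symm

lemma integral_complex_eq_zero_iff {h : Ω → ℂ} (hint : Integrable h τ)
    (hpos : ∀ᵐ ω ∂τ, 0 ≤ h ω) : (∫ ω, h ω ∂τ) = 0 ↔ h =ᵐ[τ] 0 := by
  constructor
  · intro h0
    have hre : ∫ ω, (h ω).re ∂τ = 0 := by
      have : (∫ ω, h ω ∂τ).re = ∫ ω, (h ω).re ∂τ := by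
        rw [← RCLike.re_to_complex, ← integral_re hint]; rfl
      rw [← this, h0]; rfl
    have hre0 : (fun ω => (h ω).re) =ᵐ[τ] 0 := by
      refine (integral_eq_zero_iff_of_nonneg_ae ?_ ?_).mp hre
      · filter_upwards [hpos] with ω hω using (Complex.nonneg_iff.mp hω).1
      · exact hint.re
    filter_upwards [hpos, hre0] with ω hω h1
    exact Complex.ext h1 ((Complex.nonneg_iff.mp hω).2).symm
  · intro h0
    rw [integral_congr_ae h0]; simp

end Aux

theorem stmt7 {q : ℕ} {Ω : Type*} [MeasurableSpace Ω]
    (τ : Measure Ω) [IsFiniteMeasure τ]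
    (d : Ω → Matrix (Fin q) (Fin q) ℂ)
    (hdmeas : ∀ j k : Fin q, Measurable fun ω => d ω j k)
    (hdpsd : ∀ ω, (d ω).PosSemidef)
    (hdint : ∀ j k, Integrable (fun ω => d ω j k) τ)
    (f : Ω → ℂ) (hfmeas : Measurable f)
    (hfint : ∀ j k, Integrable (fun ω => f ω * d ω j k) τ)
    -- `f` takes values in `(0,∞)` almost everywhere with respect to the trace measure of `σ`
    (hfpos : ∀ᵐ ω ∂(τ.withDensity fun ω => ENNReal.ofReal ((d ω).trace.re)),
      (f ω).im = 0 ∧ 0 < (f ω).re) :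
    LinearMap.range (Matrix.of fun j k => ∫ ω, f ω * d ω j k ∂τ).mulVecLin =
      LinearMap.range (Matrix.of fun j k => ∫ ω, d ω j k ∂τ : Matrix (Fin q) (Fin q) ℂ).mulVecLin
    ∧ LinearMap.ker (Matrix.of fun j k => ∫ ω, f ω * d ω j k ∂τ).mulVecLin =
      LinearMap.ker (Matrix.of fun j k => ∫ ω, d ω j k ∂τ : Matrix (Fin q) (Fin q) ℂ).mulVecLin := by
  classical
  set A : Matrix (Fin q) (Fin q) ℂ := Matrix.of fun j k => ∫ ω, f ω * d ω j k ∂τ with hA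
  set B : Matrix (Fin q) (Fin q) ℂ := Matrix.of fun j k => ∫ ω, d ω j k ∂τ with hB
  -- a.e. dichotomy : f is positive real, or the matrix vanishes
  have htr : Measurable fun ω => ((d ω).trace) := by
    simp only [Matrix.trace, Matrix.diag]
    exact Finset.measurable_sum _ fun j _ => hdmeas j j
  have hmeas_tr : Measurable fun ω => ENNReal.ofReal ((d ω).trace.re) :=
    ENNReal.measurable_ofReal.comp (Complex.measurable_re.comp htr)
  have h0 : ∀ᵐ ω ∂τ, ((f ω).im = 0 ∧ 0 < (f ω).re) ∨ d ω = 0 := by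
    have h1 := (ae_withDensity_iff hmeas_tr).mp hfpos
    filter_upwards [h1] with ω hω
    by_cases hz : ENNReal.ofReal ((d ω).trace.re) = 0
    · exact Or.inr (psd_eq_zero_of_trace_re_nonpos (hdpsd ω) (ENNReal.ofReal_eq_zero.mp hz))
    · exact Or.inl (hω hz)
  -- quadratic forms
  have hgnn : ∀ (x : Fin q → ℂ) ω, 0 ≤ star x ⬝ᵥ d ω *ᵥ x := fun x ω => (hdpsd ω).dotProduct_mulVec_nonneg x
  have hmf : ∀ (x : Fin q → ℂ) ω, star x ⬝ᵥ (Matrix.of fun j k => f ω * d ω j k) *ᵥ x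
      = f ω * (star x ⬝ᵥ d ω *ᵥ x) := by
    intro x ω
    rw [dot_expand, dot_expand, Finset.mul_sum]
    refine Finset.sum_congr rfl fun j _ => ?_
    rw [Finset.mul_sum]
    refine Finset.sum_congr rfl fun k _ => ?_
    simp only [Matrix.of_apply]
    ring
  have quadB : ∀ x : Fin q → ℂ, star x ⬝ᵥ B *ᵥ x = ∫ ω, star x ⬝ᵥ d ω *ᵥ x ∂τ :=
    fun x => quad_integral x hdint
  have quadA : ∀ x : Fin q → ℂ,
      star x ⬝ᵥ A *ᵥ x = ∫ ω, f ω * (star x ⬝ᵥ d ω *ᵥ x) ∂τ := by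
    intro x
    have h1 := quad_integral (τ := τ) x (m := fun ω => Matrix.of fun j k => f ω * d ω j k)
      (fun j k => by simpa using hfint j k)
    simp only [Matrix.of_apply] at h1
    rw [hA, h1]
    exact integral_congr_ae (Eventually.of_forall fun ω => hmf x ω)
  have fgInt : ∀ x : Fin q → ℂ, Integrable (fun ω => f ω * (star x ⬝ᵥ d ω *ᵥ x)) τ := by
    intro x
    have h1 : Integrable (fun ω => star x ⬝ᵥ (Matrix.of fun j k => f ω * d ω j k) *ᵥ x) τ :=
      quad_integrable x (fun j k => by simpa using hfint j k)
    exact h1.congr (Eventually.of_forall fun ω => hmf x ω)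
  have hfg_nonneg : ∀ x : Fin q → ℂ, ∀ᵐ ω ∂τ, 0 ≤ f ω * (star x ⬝ᵥ d ω *ᵥ x) := by
    intro x
    filter_upwards [h0] with ω hω
    rcases hω with ⟨him, hre⟩ | hd
    · have hg := Complex.nonneg_iff.mp (hgnn x ω)
      rw [Complex.nonneg_iff, Complex.mul_re, Complex.mul_im, him, ← hg.2]
      constructor
      · simpa using mul_nonneg hre.le hg.1
      · simp
    · simp [hd]
  -- Hermitian properties
  have hBherm : B.IsHermitian := by
    show Bᴴ = B
    ext j k
    simp only [Matrix.conjTranspose_apply, hB, Matrix.of_apply, RCLike.star_def]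
    rw [← integral_conj]
    refine integral_congr_ae (Eventually.of_forall fun ω => ?_)
    have h1 := congrFun (congrFun (hdpsd ω).1 j) k
    simpa [Matrix.conjTranspose_apply, RCLike.star_def] using h1
  have hAherm : A.IsHermitian := by
    show Aᴴ = A
    ext j k
    simp only [Matrix.conjTranspose_apply, hA, Matrix.of_apply, RCLike.star_def]
    rw [← integral_conj]
    refine integral_congr_ae ?_
    filter_upwards [h0] with ω hω
    rcases hω with ⟨him, hre⟩ | hd
    · have h1 := congrFun (congrFun (hdpsd ω).1 j) k
      simp only [Matrix.conjTranspose_apply, RCLike.star_def] at h1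
      have hf : (starRingEnd ℂ) (f ω) = f ω := Complex.conj_eq_iff_im.mpr him
      rw [_root_.map_mul, hf, h1]
    · simp [hd]
  have hBpsd : B.PosSemidef := by
    refine .of_dotProduct_mulVec_nonneg hBherm fun x => ?_
    rw [quadB x]
    exact integral_complex_nonneg (quad_integrable x hdint)
      (Eventually.of_forall (hgnn x))
  have hApsd : A.PosSemidef := by
    refine .of_dotProduct_mulVec_nonneg hAherm fun x => ?_
    rw [quadA x]
    exact integral_complex_nonneg (fgInt x) (hfg_nonneg x)
  -- kernel characterizations
  have hBx : ∀ x : Fin q → ℂ,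
      (B *ᵥ x = 0 ↔ (fun ω => star x ⬝ᵥ d ω *ᵥ x) =ᵐ[τ] 0) := by
    intro x
    rw [← hBpsd.dotProduct_mulVec_zero_iff x, quadB x,
      integral_complex_eq_zero_iff (quad_integrable x hdint) (Eventually.of_forall (hgnn x))]
  have hAx : ∀ x : Fin q → ℂ,
      (A *ᵥ x = 0 ↔ (fun ω => star x ⬝ᵥ d ω *ᵥ x) =ᵐ[τ] 0) := by
    intro x
    rw [← hApsd.dotProduct_mulVec_zero_iff x, quadA x,
      integral_complex_eq_zero_iff (fgInt x) (hfg_nonneg x)]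
    constructor
    · intro hfg
      filter_upwards [hfg, h0] with ω h1 h2
      simp only [Pi.zero_apply] at h1 ⊢
      rcases h2 with ⟨him, hre⟩ | hd
      · have hfne : f ω ≠ 0 := fun hf0 => by rw [hf0] at hre; simp at hre
        rcases mul_eq_zero.mp h1 with h | h
        · exact absurd h hfne
        · exact h
      · simp [hd]
    · intro hg
      filter_upwards [hg] with ω h1
      simp only [Pi.zero_apply] at h1 ⊢
      rw [h1, mul_zero]
  have hker : LinearMap.ker A.mulVecLin = LinearMap.ker B.mulVecLin := by
    ext x
    simp only [LinearMap.mem_ker, Matrix.mulVecLin_apply]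
    rw [hAx x, ← hBx x]
  exact ⟨range_eq_of_ker_eq hAherm hBherm hker, hker⟩
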